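/- arXiv:1801.02967 — 2 statements merged into one kernel-verified Lean document; each statement's English description precedes it below -/
import Mathlib

section
/- Suppose Φ is a symmetric positive definite matrix with Φ - δI positive semidefinite and B is a β-cocoercive operator on R^m. Then Φ^{-1}B is (δβ)-cocoercive with respect to the Φ-induced inner product ⟨x, y⟩_Φ = ⟨x, Φy⟩. -/
open Matrix

/-- If `Φ` is symmetric positive definite with `Φ - δI` positive semidefinite and `B` is
`β`-cocoercive, then `Φ⁻¹ B` is `(δβ)`-cocoercive with respect to the `Φ`-induced inner
product `⟨x, y⟩_Φ = ⟨x, Φ y⟩`. -/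
theorem precond_cocoercive {m : ℕ} (Φ : Matrix (Fin m) (Fin m) ℝ) (δ β : ℝ)
    (hδ : 0 < δ) (hβ : 0 < β) (hsymm : Φ.IsSymm) (hpd : Φ.PosDef)
    (hpsd : (Φ - δ • (1 : Matrix (Fin m) (Fin m) ℝ)).PosSemidef)
    (B : (Fin m → ℝ) → (Fin m → ℝ))
    (hco : ∀ x y, β * ((B x - B y) ⬝ᵥ (B x - B y)) ≤ (x - y) ⬝ᵥ (B x - B y)) :
    ∀ x y,
      δ * β * ((Φ⁻¹.mulVec (B x) - Φ⁻¹.mulVec (B y)) ⬝ᵥ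
          Φ.mulVec (Φ⁻¹.mulVec (B x) - Φ⁻¹.mulVec (B y)))
        ≤ (x - y) ⬝ᵥ Φ.mulVec (Φ⁻¹.mulVec (B x) - Φ⁻¹.mulVec (B y)) := by
  intro x y
  have hdet : IsUnit Φ.det := isUnit_iff_ne_zero.mpr hpd.det_pos.ne'
  set v := B x - B y with hv
  set u := Φ⁻¹.mulVec v with hu
  have h1 : Φ⁻¹.mulVec (B x) - Φ⁻¹.mulVec (B y) = u := by
    rw [hu, hv, Matrix.mulVec_sub]
  have h2 : Φ.mulVec u = v := by
    rw [hu, Matrix.mulVec_mulVec, Matrix.mul_nonsing_inv Φ hdet, Matrix.one_mulVec]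
  rw [h1, h2]
  set A := Φ - δ • (1 : Matrix (Fin m) (Fin m) ℝ) with hA
  have hAu : 0 ≤ u ⬝ᵥ A.mulVec u := by simpa using hpsd.dotProduct_mulVec_nonneg u
  have hA2 : (0:ℝ) ≤ (A.mulVec u) ⬝ᵥ (A.mulVec u) :=
    Finset.sum_nonneg fun i _ => mul_self_nonneg _
  have hsplit : v = A.mulVec u + δ • u := by
    rw [← h2, hA]
    simp [Matrix.sub_mulVec, Matrix.smul_mulVec, Matrix.one_mulVec]
  have key : δ * (u ⬝ᵥ v) ≤ v ⬝ᵥ v := by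
    have hc : (A.mulVec u) ⬝ᵥ u = u ⬝ᵥ (A.mulVec u) := dotProduct_comm _ _
    rw [hsplit]
    simp only [dotProduct_add, add_dotProduct, dotProduct_smul,
      smul_dotProduct, smul_eq_mul, hc]
    nlinarith [hAu, hA2, hδ]
  have hB := hco x y
  rw [← hv] at hB
  nlinarith [key, hB, hβ, mul_le_mul_of_nonneg_left key hβ.le]
end

section
/- Let G be a connected undirected graph. Suppose x* ∈ Ω and λ* satisfy the KKT conditions: 0 ∈ ∇_{x_i} f_i(x_i*, x_{−i}*) + A_i^T λ* + N_{Ω_i}(x_i*) for all i, and Σ_i A_i x_i* = Σ_i b_i. If additionally Λ* = 1_N ⊗ λ* and z* satisfies −𝐕z* − 𝐀x* + 𝐛 = 0 componentwise with 𝐕 = V ⊗ I_m, then (Λ*, z*, x*) is a zero of the operator A + B with A(Λ,z,x) = (−𝐀x − 𝐕z, 𝐕^T Λ, 𝐀^T Λ + N_Ω(x)) and B(Λ,z,x) = (𝐛, 0, F(x)). Conversely, any zero of A + B yields Λ* = 1_N ⊗ λ* (multiplier consensus) and (x*, λ*) satisfying the KKT conditions. -/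
open Matrix

/-- Incidence matrix of the oriented graph with edge list `e`. -/
def Vinc {N M : ℕ} (e : Fin M → Fin N × Fin N) : Matrix (Fin N) (Fin M) ℝ :=
  Matrix.of fun i l => if i = (e l).2 then 1 else if i = (e l).1 then -1 else 0

/-- The (undirected) graph defined by the edge list `e` is connected. -/
def ConnectedEdges {N M : ℕ} (e : Fin M → Fin N × Fin N) : Prop :=
  ∀ i j : Fin N, Relation.ReflTransGen (fun a b => ∃ l, e l = (a, b) ∨ e l = (b, a)) i j

/-- Normal cone of `C ⊆ ℝ^k` at `x` (w.r.t. the dot product). -/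
def NC {k : ℕ} (C : Set (Fin k → ℝ)) (x : Fin k → ℝ) : Set (Fin k → ℝ) :=
  {v | x ∈ C ∧ ∀ y ∈ C, v ⬝ᵥ (y - x) ≤ 0}

/-- KKT conditions for the variational GNE: `0 ∈ F(x)_i + A_iᵀ λ + N_{Ω_i}(x_i)` for all
`i` (where `F` is the stacked pseudo-gradient, `F(x)_i = ∇_{x_i} f_i(x_i, x_{-i})`), and
`Σ_i A_i x_i = Σ_i b_i`. -/
def KKTcond {Np m : ℕ} (n : Fin Np → ℕ) (A : ∀ i, Matrix (Fin m) (Fin (n i)) ℝ)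
    (b : Fin Np → Fin m → ℝ) (Ω : ∀ i, Set (Fin (n i) → ℝ))
    (F : (∀ j, Fin (n j) → ℝ) → ∀ i, Fin (n i) → ℝ)
    (x : ∀ i, Fin (n i) → ℝ) (lam : Fin m → ℝ) : Prop :=
  (∀ i, ∃ v ∈ NC (Ω i) (x i), F x i + (A i)ᵀ.mulVec lam + v = 0) ∧
    ∑ i, (A i).mulVec (x i) = ∑ i, b i

/-- `(Λ, z, x)` is a zero of `𝔄 + 𝔅` with
`𝔄(Λ,z,x) = (-𝐀x - 𝐕z, 𝐕ᵀΛ, 𝐀ᵀΛ + N_Ω(x))` and `𝔅(Λ,z,x) = (𝐛, 0, F(x))`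
(all written blockwise, with `𝐕 = V ⊗ I_m`). -/
def ZeroCond {Np M m : ℕ} (n : Fin Np → ℕ) (e : Fin M → Fin Np × Fin Np)
    (A : ∀ i, Matrix (Fin m) (Fin (n i)) ℝ) (b : Fin Np → Fin m → ℝ)
    (Ω : ∀ i, Set (Fin (n i) → ℝ))
    (F : (∀ j, Fin (n j) → ℝ) → ∀ i, Fin (n i) → ℝ)
    (Λ : Fin Np → Fin m → ℝ) (z : Fin M → Fin m → ℝ) (x : ∀ i, Fin (n i) → ℝ) : Prop :=
  (∀ i, -(A i).mulVec (x i) - (∑ l, Vinc e i l • z l) + b i = 0) ∧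
    (∀ l, ∑ i, Vinc e i l • Λ i = 0) ∧
    (∀ i, ∃ v ∈ NC (Ω i) (x i), (A i)ᵀ.mulVec (Λ i) + v + F x i = 0)


lemma sum_vinc_smul {Np M m : ℕ} (e : Fin M → Fin Np × Fin Np) (l : Fin M)
    (hne : (e l).1 ≠ (e l).2) (w : Fin Np → Fin m → ℝ) :
    ∑ i, Vinc e i l • w i = w (e l).2 - w (e l).1 := by
  have h : ∀ i, Vinc e i l • w i =
      (if i = (e l).2 then w i else 0) + (if i = (e l).1 then -w i else 0) := by
    intro i
    by_cases h2 : i = (e l).2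
    · have h1 : i ≠ (e l).1 := fun h => hne (h ▸ h2)
      simp [Vinc, h2, h1, Ne.symm hne]
    · by_cases h1 : i = (e l).1
      · simp [Vinc, h1, h2, hne]
      · simp [Vinc, h1, h2]
  rw [Finset.sum_congr rfl (fun i _ => h i), Finset.sum_add_distrib]
  simp [sub_eq_add_neg]

/-- KKT points with consensual multipliers `Λ* = 1_N ⊗ λ*` and edge variables `z*`
balancing the constraint are zeros of `𝔄 + 𝔅`; conversely, any zero of `𝔄 + 𝔅` has
consensual multipliers `Λ = 1_N ⊗ λ*` and `(x, λ*)` satisfies the KKT conditions. -/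
theorem zero_iff_KKT {Np M m : ℕ} (n : Fin Np → ℕ) (e : Fin M → Fin Np × Fin Np)
    (hne : ∀ l, (e l).1 ≠ (e l).2) (hconn : ConnectedEdges e)
    (A : ∀ i, Matrix (Fin m) (Fin (n i)) ℝ) (b : Fin Np → Fin m → ℝ)
    (Ω : ∀ i, Set (Fin (n i) → ℝ))
    (F : (∀ j, Fin (n j) → ℝ) → ∀ i, Fin (n i) → ℝ) :
    (∀ (xstar : ∀ i, Fin (n i) → ℝ) (lam : Fin m → ℝ) (zstar : Fin M → Fin m → ℝ),
        KKTcond n A b Ω F xstar lam →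
        (∀ i, -(∑ l, Vinc e i l • zstar l) - (A i).mulVec (xstar i) + b i = 0) →
        ZeroCond n e A b Ω F (fun _ => lam) zstar xstar) ∧
      (∀ (Λ : Fin Np → Fin m → ℝ) (z : Fin M → Fin m → ℝ) (x : ∀ i, Fin (n i) → ℝ),
        ZeroCond n e A b Ω F Λ z x →
        ∃ lam : Fin m → ℝ, (∀ i, Λ i = lam) ∧ KKTcond n A b Ω F x lam) := by
  constructor
  · rintro xstar lam zstar ⟨hkkt1, _hkkt2⟩ hz
    refine ⟨fun i => by have := hz i; linear_combination this, fun l => ?_, fun i => ?_⟩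
    · rw [sum_vinc_smul e l (hne l)]; simp
    · obtain ⟨v, hv, hveq⟩ := hkkt1 i
      exact ⟨v, hv, by linear_combination hveq⟩
  · rintro Λ z x ⟨hz1, hz2, hz3⟩
    rcases isEmpty_or_nonempty (Fin Np) with hE | hN
    · exact ⟨0, fun i => (hE.false i).elim, fun i => (hE.false i).elim, by simp⟩
    · obtain ⟨i0⟩ := hN
      have hedge : ∀ l : Fin M, Λ (e l).2 = Λ (e l).1 := by
        intro l
        have := hz2 l
        rw [sum_vinc_smul e l (hne l)] at this
        exact sub_eq_zero.mp this
      have hconst : ∀ i, Λ i = Λ i0 := by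
        intro i
        induction hconn i0 i with
        | refl => rfl
        | tail _ hbc ih =>
          obtain ⟨l, hl | hl⟩ := hbc
          · rw [← ih]; have := hedge l; rw [hl] at this; exact this
          · rw [← ih]; have := hedge l; rw [hl] at this; exact this.symm
      refine ⟨Λ i0, hconst, fun i => ?_, ?_⟩
      · obtain ⟨v, hv, hveq⟩ := hz3 i
        rw [hconst i] at hveq
        exact ⟨v, hv, by linear_combination hveq⟩
      · have hsum : ∀ i, (A i).mulVec (x i) = b i - ∑ l, Vinc e i l • z l := by
          intro i; have := hz1 i; linear_combination -this
        rw [Finset.sum_congr rfl (fun i _ => hsum i), Finset.sum_sub_distrib,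
          Finset.sum_comm]
        have : ∀ l : Fin M, (∑ i, Vinc e i l • z l) = 0 := by
          intro l
          rw [sum_vinc_smul e l (hne l)]
          simp
        simp [Finset.sum_congr rfl (fun l _ => this l)]
end
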